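/- Let μ be a probability measure on a metric space X and suppose x₁ and x₂ are two distinct points in the topological support of μ. Then for every η > 0 with 4 * η < dist x₁ x₂, setting δ := min (μ (Metric.ball x₁ η)) (μ (Metric.ball x₂ η)), one has δ > 0 and μ (Metric.ball y η) ≤ 1 - δ for every y ∈ X. (Core estimate showing that a non-point smearing measure gives localization probabilities uniformly bounded away from 1.) -/

import Mathlib

open MeasureTheory

/-- If a probability measure has two distinct points `x₁ ≠ x₂` in its topological support
(every open neighborhood of each has positive measure), then for every `η > 0` with
`4η < dist x₁ x₂` the localization probabilities `μ (ball y η)` are uniformly bounded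
away from `1`, by `1 - min (μ (ball x₁ η)) (μ (ball x₂ η))`. -/
theorem stmt_3
    {X : Type*} [MetricSpace X] [MeasurableSpace X] [BorelSpace X]
    (μ : Measure X) [IsProbabilityMeasure μ]
    (x₁ x₂ : X) (hne : x₁ ≠ x₂)
    (hsupp₁ : ∀ U : Set X, IsOpen U → x₁ ∈ U → 0 < μ U)
    (hsupp₂ : ∀ U : Set X, IsOpen U → x₂ ∈ U → 0 < μ U) :
    ∀ η > (0 : ℝ), 4 * η < dist x₁ x₂ →
      0 < min (μ (Metric.ball x₁ η)) (μ (Metric.ball x₂ η)) ∧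
      ∀ y : X, μ (Metric.ball y η) ≤
        1 - min (μ (Metric.ball x₁ η)) (μ (Metric.ball x₂ η)) := by
  intro η hη hdist
  set δ := min (μ (Metric.ball x₁ η)) (μ (Metric.ball x₂ η)) with hδ
  have hδpos : 0 < δ := by
    apply lt_min
    · exact hsupp₁ _ Metric.isOpen_ball (Metric.mem_ball_self hη)
    · exact hsupp₂ _ Metric.isOpen_ball (Metric.mem_ball_self hη)
  refine ⟨hδpos, fun y => ?_⟩
  -- ball y η is disjoint from ball x₁ η or ball x₂ η
  have hdisj : Disjoint (Metric.ball y η) (Metric.ball x₁ η) ∨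
      Disjoint (Metric.ball y η) (Metric.ball x₂ η) := by
    by_contra h
    push_neg at h
    obtain ⟨h1, h2⟩ := h
    rw [Set.not_disjoint_iff] at h1 h2
    obtain ⟨a, ha1, ha2⟩ := h1
    obtain ⟨b, hb1, hb2⟩ := h2
    have : dist x₁ x₂ ≤ 4 * η := by
      have h₁ : dist x₁ x₂ ≤ dist x₁ a + dist a y + dist y b + dist b x₂ := by
        calc dist x₁ x₂ ≤ dist x₁ y + dist y x₂ := dist_triangle _ _ _
          _ ≤ (dist x₁ a + dist a y) + (dist y b + dist b x₂) :=
            add_le_add (dist_triangle _ _ _) (dist_triangle _ _ _)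
          _ = _ := by ring
    -- each distance < η
      have := Metric.mem_ball.mp ha1
      have := Metric.mem_ball.mp ha2
      have := Metric.mem_ball.mp hb1
      have := Metric.mem_ball.mp hb2
      simp only [dist_comm] at *
      nlinarith [dist_comm x₁ a, dist_comm a y, dist_comm y b, dist_comm b x₂]
    linarith
  have key : μ (Metric.ball y η) + δ ≤ 1 := by
    rcases hdisj with hd | hd
    · calc μ (Metric.ball y η) + δ ≤ μ (Metric.ball y η) + μ (Metric.ball x₁ η) :=
          add_le_add_right (min_le_left _ _) _
        _ = μ (Metric.ball y η ∪ Metric.ball x₁ η) :=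
          (measure_union hd Metric.isOpen_ball.measurableSet).symm
        _ ≤ μ Set.univ := measure_mono (Set.subset_univ _)
        _ = 1 := measure_univ
    · calc μ (Metric.ball y η) + δ ≤ μ (Metric.ball y η) + μ (Metric.ball x₂ η) :=
          add_le_add_right (min_le_right _ _) _
        _ = μ (Metric.ball y η ∪ Metric.ball x₂ η) :=
          (measure_union hd Metric.isOpen_ball.measurableSet).symm
        _ ≤ μ Set.univ := measure_mono (Set.subset_univ _)
        _ = 1 := measure_univ
  exact ENNReal.le_sub_of_add_le_right (ne_top_of_le_ne_top ENNReal.one_ne_top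
    (le_trans (min_le_left _ _) (measure_mono (Set.subset_univ _) |>.trans_eq measure_univ))) key
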